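/- Let K be a spherically complete valued field (every chain of balls, ordered by inclusion, has non-empty intersection). Then K satisfies Hensel's lemma: for every polynomial P ∈ O_K[X] with |P(0)| < 1 and |P'(0)| = 1, there exists a ∈ M_K with P(a) = 0. -/

import Mathlib

variable {K : Type*} [Field K] {Γ₀ : Type*} [LinearOrderedCommGroupWithZero Γ₀]

open Polynomial

namespace SCHensel

variable (v : Valuation K Γ₀)

lemma v_natCast_le_one (n : ℕ) : v (n : K) ≤ 1 := by
  induction n with
  | zero => simp
  | succ n ih =>
      push_cast
      exact (v.map_add _ _).trans (max_le ih (le_of_eq v.map_one))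

lemma v_eval_le_one {P : K[X]} (hP : ∀ i, v (P.coeff i) ≤ 1) {x : K} (hx : v x ≤ 1) :
    v (P.eval x) ≤ 1 := by
  rw [Polynomial.eval_eq_sum_range]
  refine Valuation.map_sum_le v fun i _ => ?_
  rw [v.map_mul, v.map_pow]
  exact mul_le_one' (hP i) (pow_le_one' hx i)

lemma v_taylor_coeff_le_one {P : K[X]} (hP : ∀ i, v (P.coeff i) ≤ 1) {a : K} (ha : v a ≤ 1)
    (n : ℕ) : v ((taylor a P).coeff n) ≤ 1 := by
  rw [taylor_coeff]
  refine v_eval_le_one v (fun i => ?_) ha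
  rw [hasseDeriv_coeff, v.map_mul]
  exact mul_le_one' (v_natCast_le_one v _) (hP _)

lemma v_divX_le_one {P : K[X]} (hP : ∀ i, v (P.coeff i) ≤ 1) (n : ℕ) :
    v (P.divX.coeff n) ≤ 1 := by
  rw [Polynomial.coeff_divX]; exact hP _

lemma v_deriv_coeff_le_one {P : K[X]} (hP : ∀ i, v (P.coeff i) ≤ 1) (n : ℕ) :
    v ((derivative P).coeff n) ≤ 1 := by
  rw [Polynomial.coeff_derivative, v.map_mul]
  have : ((n : K) + 1) = ((n + 1 : ℕ) : K) := by push_cast; ring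
  rw [this]
  exact mul_le_one' (hP _) (v_natCast_le_one v _)

/-- Second-order Taylor expansion. -/
lemma taylor_two (P : K[X]) (a t : K) :
    P.eval (a + t) = P.eval a + (derivative P).eval a * t
      + ((taylor a P).divX.divX).eval t * t ^ 2 := by
  have h : P.eval (a + t) = (taylor a P).eval t := by
    rw [Polynomial.taylor_eval, add_comm]
  rw [h]
  conv_lhs => rw [← Polynomial.divX_mul_X_add (taylor a P)]
  conv_lhs => rw [← Polynomial.divX_mul_X_add (taylor a P).divX]
  simp only [Polynomial.eval_add, Polynomial.eval_mul, Polynomial.eval_C, Polynomial.eval_X,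
    Polynomial.coeff_divX, Polynomial.taylor_coeff_zero]
  rw [Polynomial.taylor_coeff_one]
  ring

/-- If `v a < 1` then the derivative still has valuation 1. -/
lemma v_deriv_eval {P : K[X]} (hP : ∀ i, v (P.coeff i) ≤ 1)
    (h1 : v ((derivative P).eval 0) = 1) {a : K} (ha : v a < 1) :
    v ((derivative P).eval a) = 1 := by
  have hsplit : (derivative P).eval a = ((derivative P).divX).eval a * a
      + (derivative P).eval 0 := by
    conv_lhs => rw [← Polynomial.divX_mul_X_add (derivative P)]
    simp [Polynomial.coeff_zero_eq_eval_zero]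
  rw [hsplit, Valuation.map_add_eq_of_lt_right, h1]
  rw [h1, v.map_mul]
  calc v (((derivative P).divX).eval a) * v a ≤ 1 * v a := by
        exact mul_le_mul_left (v_eval_le_one v
          (fun i => v_divX_le_one v (v_deriv_coeff_le_one v hP) i) ha.le) _
    _ = v a := one_mul _
    _ < 1 := ha

/-- Moving within the ball of radius `v (P.eval a)` preserves the key estimates. -/
lemma step {P : K[X]} (hP : ∀ i, v (P.coeff i) ≤ 1) {a c : K} (ha : v a < 1)
    (hpa : v (P.eval a) < 1) (hc : v (c - a) ≤ v (P.eval a)) :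
    v c < 1 ∧ v (P.eval c) ≤ v (P.eval a) := by
  set t := c - a with ht
  have htc : c = a + t := by rw [ht]; ring
  have ht1 : v t < 1 := lt_of_le_of_lt hc hpa
  have hvc : v c < 1 := by
    rw [htc]; exact lt_of_le_of_lt (v.map_add a t) (max_lt ha ht1)
  refine ⟨hvc, ?_⟩
  rw [htc, taylor_two]
  refine (v.map_add _ _).trans (max_le ((v.map_add _ _).trans (max_le le_rfl ?_)) ?_)
  · rw [v.map_mul]
    calc v ((derivative P).eval a) * v t ≤ 1 * v t :=
          mul_le_mul_left (v_eval_le_one v (v_deriv_coeff_le_one v hP) ha.le) _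
      _ = v t := one_mul _
      _ ≤ v (P.eval a) := hc
  · rw [v.map_mul, v.map_pow]
    have hS : v (((taylor a P).divX.divX).eval t) ≤ 1 :=
      v_eval_le_one v (fun i => v_divX_le_one v
        (v_divX_le_one v (v_taylor_coeff_le_one v hP ha.le)) i) ht1.le
    calc v (((taylor a P).divX.divX).eval t) * v t ^ 2 ≤ 1 * v t ^ 2 :=
          mul_le_mul_left hS _
      _ = v t * v t := by rw [one_mul, sq]
      _ ≤ v (P.eval a) * 1 := mul_le_mul' hc ht1.le
      _ = v (P.eval a) := mul_one _

end SCHensel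

/-- A spherically complete valued field (every chain of balls has nonempty
intersection) satisfies Hensel's lemma: any `P ∈ O_K[X]` with `|P(0)| < 1` and
`|P'(0)| = 1` has a root in the maximal ideal `M_K`. -/
theorem spherically_complete_henselian (v : Valuation K Γ₀)
    (hsc : ∀ 𝒞 : Set (Set K), 𝒞.Nonempty →
      (∀ B ∈ 𝒞, ∃ (a : K) (γ : Γ₀), γ ≠ 0 ∧
        (B = {y : K | v (y - a) < γ} ∨ B = {y : K | v (y - a) ≤ γ})) →
      IsChain (· ⊆ ·) 𝒞 → (⋂₀ 𝒞).Nonempty)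
    (P : Polynomial K) (hP : ∀ i, v (P.coeff i) ≤ 1)
    (h0 : v (P.eval 0) < 1) (h1 : v ((Polynomial.derivative P).eval 0) = 1) :
    ∃ a : K, v a < 1 ∧ P.eval a = 0 := by
  by_contra hcon
  push_neg at hcon
  -- hcon : ∀ a, v a < 1 → P.eval a ≠ 0
  set Ball : K → Set K := fun a => {y : K | v (y - a) ≤ v (P.eval a)} with hBall
  set S : Set (Set K) := {B | ∃ a, v a < 1 ∧ v (P.eval a) ≤ v (P.eval 0) ∧ B = Ball a}
    with hS
  have good0 : (Ball 0) ∈ S := ⟨0, by simp, le_rfl, rfl⟩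
  have mem_self : ∀ a, a ∈ Ball a := by
    intro a; simp only [hBall, Set.mem_setOf_eq, sub_self, v.map_zero]; exact zero_le'
  -- the key "step" consequences
  have key : ∀ a c : K, v a < 1 → v (P.eval a) ≤ v (P.eval 0) → c ∈ Ball a →
      v c < 1 ∧ v (P.eval c) ≤ v (P.eval a) := by
    intro a c ha hpa hc
    exact SCHensel.step v hP ha (lt_of_le_of_lt hpa h0) hc
  have ball_mono : ∀ a c : K, v (P.eval c) ≤ v (P.eval a) → c ∈ Ball a →
      Ball c ⊆ Ball a := by
    intro a c hpc hc z hz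
    simp only [hBall, Set.mem_setOf_eq] at *
    have : z - a = (z - c) + (c - a) := by ring
    rw [this]
    exact (v.map_add _ _).trans (max_le (le_trans hz hpc) hc)
  obtain ⟨m, hmS, hmmin⟩ : ∃ m, Minimal (· ∈ S) m := by
    refine zorn_superset S ?_
    intro c hcS hchain
    rcases Set.eq_empty_or_nonempty c with rfl | hne
    · exact ⟨Ball 0, good0, by simp⟩
    · have hballs : ∀ B ∈ c, ∃ (a : K) (γ : Γ₀), γ ≠ 0 ∧
          (B = {y : K | v (y - a) < γ} ∨ B = {y : K | v (y - a) ≤ γ}) := by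
        intro B hB
        obtain ⟨a, ha, hpa, rfl⟩ := hcS hB
        exact ⟨a, v (P.eval a), v.ne_zero_iff.mpr (hcon a ha), Or.inr rfl⟩
      obtain ⟨x, hx⟩ := hsc c hne hballs hchain
      rw [Set.mem_sInter] at hx
      obtain ⟨B₀, hB₀⟩ := hne
      obtain ⟨a₀, ha₀, hpa₀, rfl⟩ := hcS hB₀
      obtain ⟨hx1, hx2⟩ := key a₀ x ha₀ hpa₀ (hx _ hB₀)
      refine ⟨Ball x, ⟨x, hx1, hx2.trans hpa₀, rfl⟩, ?_⟩
      intro B hB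
      obtain ⟨a, ha, hpa, rfl⟩ := hcS hB
      exact ball_mono a x (key a x ha hpa (hx _ hB)).2 (hx _ hB)
  obtain ⟨a₀, ha₀, hpa₀, rfl⟩ := hmS
  -- Newton step from a₀
  have hd : v ((Polynomial.derivative P).eval a₀) = 1 := SCHensel.v_deriv_eval v hP h1 ha₀
  have hdne : (Polynomial.derivative P).eval a₀ ≠ 0 := by
    intro h; rw [h, v.map_zero] at hd; exact zero_ne_one hd
  set b := a₀ - P.eval a₀ / (Polynomial.derivative P).eval a₀ with hb
  have hba : b - a₀ = -(P.eval a₀ / (Polynomial.derivative P).eval a₀) := by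
    rw [hb]; ring
  have hvba : v (b - a₀) = v (P.eval a₀) := by
    rw [hba, v.map_neg, v.map_div, hd, div_one]
  have hbmem : b ∈ Ball a₀ := by
    simp only [hBall, Set.mem_setOf_eq, hvba, le_refl]
  obtain ⟨hb1, hb2⟩ := key a₀ b ha₀ hpa₀ hbmem
  -- strict decrease
  have hpa₀ne : v (P.eval a₀) ≠ 0 := v.ne_zero_iff.mpr (hcon a₀ ha₀)
  have hstrict : v (P.eval b) < v (P.eval a₀) := by
    have hbeq : b = a₀ + (b - a₀) := by ring
    have hcanc : P.eval a₀ + (Polynomial.derivative P).eval a₀ * (b - a₀) = 0 := by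
      rw [hba]; field_simp; ring
    have : P.eval b = ((taylor a₀ P).divX.divX).eval (b - a₀) * (b - a₀) ^ 2 := by
      conv_lhs => rw [hbeq]
      rw [SCHensel.taylor_two, hcanc, zero_add]
    rw [this, v.map_mul, v.map_pow]
    have hS1 : v (((taylor a₀ P).divX.divX).eval (b - a₀)) ≤ 1 := by
      refine SCHensel.v_eval_le_one v (fun i => SCHensel.v_divX_le_one v
        (SCHensel.v_divX_le_one v (SCHensel.v_taylor_coeff_le_one v hP ha₀.le)) i) ?_
      rw [hvba]; exact (hpa₀.trans h0.le)
    calc v (((taylor a₀ P).divX.divX).eval (b - a₀)) * v (b - a₀) ^ 2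
        ≤ 1 * v (b - a₀) ^ 2 := mul_le_mul_left hS1 _
      _ = v (P.eval a₀) * v (P.eval a₀) := by rw [one_mul, hvba, sq]
      _ < v (P.eval a₀) * 1 :=
          mul_lt_mul_of_pos_left (lt_of_le_of_lt hpa₀ h0) (pos_iff_ne_zero.mpr hpa₀ne)
      _ = v (P.eval a₀) := mul_one _
  -- Ball b is a strictly smaller element of S: contradiction with minimality
  have hbS : Ball b ∈ S := ⟨b, hb1, hb2.trans hpa₀, rfl⟩
  have hsub : Ball b ⊆ Ball a₀ := ball_mono a₀ b hb2 hbmem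
  have := hmmin hbS hsub
  have ha₀b : a₀ ∈ Ball b := this (mem_self a₀)
  simp only [hBall, Set.mem_setOf_eq] at ha₀b
  rw [v.map_sub_swap, hvba] at ha₀b
  exact absurd (lt_of_le_of_lt ha₀b hstrict) (lt_irrefl _)
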